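/- Let θ ∈ ℝ with cos θ > 0, let T ∈ GL(2,ℝ) be the rotation by angle θ, and let a ∈ ℝ² satisfy |sin θ| ≤ ‖a‖ < 1. Then the map T̄ₐ(x) = (a+T(x))/‖a+T(x)‖ on S¹ has a fixed point. -/

import Mathlib

open Matrix Real
open scoped RealInnerProductSpace

lemma toEL_mul {A B : Matrix (Fin 2) (Fin 2) ℝ} (v : EuclideanSpace ℝ (Fin 2)) :
    Matrix.toEuclideanLin (A * B) v = Matrix.toEuclideanLin A (Matrix.toEuclideanLin B v) := by
  simp [Matrix.toEuclideanLin_apply, Matrix.mulVec_mulVec]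

lemma toEL_one (v : EuclideanSpace ℝ (Fin 2)) :
    Matrix.toEuclideanLin (1 : Matrix (Fin 2) (Fin 2) ℝ) v = v := by
  simp [Matrix.toEuclideanLin_apply, Matrix.one_mulVec]

lemma toEL_smul_one (c : ℝ) (v : EuclideanSpace ℝ (Fin 2)) :
    Matrix.toEuclideanLin (c • (1 : Matrix (Fin 2) (Fin 2) ℝ)) v = c • v := by
  simp [Matrix.toEuclideanLin_apply]

/-- The "affine" map `x ↦ (a + T(x))/‖a + T(x)‖` induced on the unit sphere. -/
noncomputable def affAct {m : ℕ} (A : Matrix (Fin m) (Fin m) ℝ)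
    (a x : EuclideanSpace ℝ (Fin m)) : EuclideanSpace ℝ (Fin m) :=
  ‖a + Matrix.toEuclideanLin A x‖⁻¹ • (a + Matrix.toEuclideanLin A x)

theorem stmt15 (θ : ℝ) (hcos : 0 < Real.cos θ)
    (a : EuclideanSpace ℝ (Fin 2))
    (hge : |Real.sin θ| ≤ ‖a‖) (hlt : ‖a‖ < 1) :
    ∃ x : EuclideanSpace ℝ (Fin 2), ‖x‖ = 1 ∧
      affAct (!![Real.cos θ, -Real.sin θ; Real.sin θ, Real.cos θ]) a x = x := by
  set c := Real.cos θ
  set s := Real.sin θ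
  by_cases ha : a = 0
  · -- degenerate case: a = 0, sin θ = 0, cos θ = 1
    have hs : s = 0 := by
      have : |s| ≤ 0 := by simpa [ha] using hge
      simpa using le_antisymm this (abs_nonneg s)
    have hc : c = 1 := by
      have h1 : s ^ 2 + c ^ 2 = 1 := Real.sin_sq_add_cos_sq θ
      have : c ^ 2 = 1 := by rw [hs] at h1; linarith
      nlinarith
    refine ⟨EuclideanSpace.single 0 1, by simp, ?_⟩
    have hmat : (!![c, -s; s, c] : Matrix (Fin 2) (Fin 2) ℝ) = 1 := by
      rw [hs, hc]; simp [Matrix.one_fin_two]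
    rw [affAct, hmat, ha, toEL_one, zero_add]
    simp
  · have hr : (0 : ℝ) < ‖a‖ := norm_pos_iff.mpr ha
    set r : ℝ := ‖a‖ with hrdef
    set u : ℝ := Real.sqrt (r ^ 2 - s ^ 2) with hudef
    have hs2 : s ^ 2 ≤ r ^ 2 := by
      have h := pow_le_pow_left₀ (abs_nonneg s) hge 2
      rwa [sq_abs] at h
    have hu0 : 0 ≤ u := Real.sqrt_nonneg _
    have hu2 : u ^ 2 = r ^ 2 - s ^ 2 := Real.sq_sqrt (by linarith)
    set N : Matrix (Fin 2) (Fin 2) ℝ := !![u, -s; s, u] with hN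
    have hNH : Nᴴ = !![u, s; -s, u] := by
      ext i j; fin_cases i <;> fin_cases j <;> simp [hN]
    have hMN : Nᴴ * N = (r ^ 2) • (1 : Matrix (Fin 2) (Fin 2) ℝ) := by
      rw [hNH, hN]
      ext i j; fin_cases i <;> fin_cases j <;>
        simp [Matrix.mul_apply, Fin.sum_univ_two, Matrix.one_apply] <;> nlinarith
    set L : ℝ := c + u with hL
    have hLpos : 0 < L := by positivity
    have hRmat : (!![c, -s; s, c] : Matrix (Fin 2) (Fin 2) ℝ) = L • 1 - Nᴴ := by
      rw [hNH, hL]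
      ext i j; fin_cases i <;> fin_cases j <;> simp [Matrix.one_apply] <;> ring
    set y : EuclideanSpace ℝ (Fin 2) := Matrix.toEuclideanLin N a with hy
    -- norm of y
    have hyip : (inner ℝ y y : ℝ) = r ^ 2 * (inner ℝ a a : ℝ) := by
      have h1 : (inner ℝ (Matrix.toEuclideanLin Nᴴ y) a : ℝ) = (inner ℝ y y : ℝ) := by
        rw [Matrix.toEuclideanLin_conjTranspose_eq_adjoint, LinearMap.adjoint_inner_left, hy]
      rw [← h1, hy, ← toEL_mul, hMN, toEL_smul_one, real_inner_smul_left]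
    have hny : ‖y‖ = r ^ 2 := by
      have h2 : ‖y‖ ^ 2 = (r ^ 2) ^ 2 := by
        rw [← real_inner_self_eq_norm_sq, hyip, real_inner_self_eq_norm_sq, ← hrdef]; ring
      nlinarith [norm_nonneg y]
    set x : EuclideanSpace ℝ (Fin 2) := (r ^ 2)⁻¹ • y with hx
    have hr2 : (0:ℝ) < r ^ 2 := by positivity
    have hnx : ‖x‖ = 1 := by
      rw [hx, norm_smul, hny, norm_inv, Real.norm_eq_abs, abs_of_pos hr2]
      field_simp
    -- the key algebraic identity
    have hNHx : Matrix.toEuclideanLin Nᴴ x = a := by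
      rw [hx, LinearMap.map_smul, hy, ← toEL_mul, hMN, toEL_smul_one]
      rw [smul_smul, inv_mul_cancel₀ (ne_of_gt hr2), one_smul]
    refine ⟨x, hnx, ?_⟩
    have hkey : a + Matrix.toEuclideanLin !![c, -s; s, c] x = L • x := by
      rw [hRmat, map_sub, LinearMap.sub_apply, toEL_smul_one, hNHx]
      abel
    rw [affAct, hkey, norm_smul, hnx, Real.norm_eq_abs, abs_of_pos hLpos]
    rw [mul_one, smul_smul, inv_mul_cancel₀ (ne_of_gt hLpos), one_smul]
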